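/- Let $\Theta = \mathbb{R} \times [\underline{\sigma}^2, \infty)$ with $\underline{\sigma}^2 > 0$, let $f_{(\mu,\sigma^2)}$ be the $\mathcal{N}(\mu,\sigma^2)$ density, and let $Y$ be a real random variable. For $C > 0$ let $B_{2,C} = \{(\mu,\sigma^2) \in \Theta : |\mu| \geq C\}$. Then $\mathbb{E}\big[\sup_{\theta \in B_{2,C}} \log f_\theta(Y)\big] \leq -\tfrac{1}{2}\log(2\pi\underline{\sigma}^2)\, \mathbb{P}(|Y| \geq C/2) - \tfrac{1}{2}\log(\pi C^2/2)\, \mathbb{P}(|Y| < C/2)$, and this upper bound tends to $-\infty$ as $C \to \infty$. -/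

import Mathlib

open MeasureTheory Filter Topology
set_option maxHeartbeats 1000000

noncomputable def gaussDens (μ σ2 y : ℝ) : ℝ :=
  (Real.sqrt (2 * Real.pi * σ2))⁻¹ * Real.exp (-(y - μ) ^ 2 / (2 * σ2))

lemma log_gaussDens {σ2 : ℝ} (h : 0 < σ2) (μ y : ℝ) :
    Real.log (gaussDens μ σ2 y) =
      -(1/2) * Real.log (2 * Real.pi * σ2) - (y - μ) ^ 2 / (2 * σ2) := by
  have hpos : 0 < 2 * Real.pi * σ2 := by positivity
  unfold gaussDens
  rw [Real.log_mul (inv_ne_zero (by positivity)) (Real.exp_ne_zero _), Real.log_inv,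
    Real.log_sqrt hpos.le, Real.log_exp]
  ring

lemma logA {σlb σ2 : ℝ} (hσlb : 0 < σlb) (h : σlb ≤ σ2) (μ y : ℝ) :
    Real.log (gaussDens μ σ2 y) ≤ -(1/2) * Real.log (2 * Real.pi * σlb) := by
  have h2 : 0 < σ2 := hσlb.trans_le h
  rw [log_gaussDens h2]
  have hlog : Real.log (2 * Real.pi * σlb) ≤ Real.log (2 * Real.pi * σ2) :=
    Real.log_le_log (by positivity) (by nlinarith [Real.pi_pos])
  have hd : 0 ≤ (y - μ) ^ 2 / (2 * σ2) := by positivity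
  linarith

lemma logB {σlb σ2 C μ y : ℝ} (hσlb : 0 < σlb) (h : σlb ≤ σ2) (hC : 0 < C)
    (hμ : C ≤ |μ|) (hy : |y| < C / 2) :
    Real.log (gaussDens μ σ2 y) ≤ -(1/2) * Real.log (Real.pi * C ^ 2 / 2) := by
  have h2 : 0 < σ2 := hσlb.trans_le h
  rw [log_gaussDens h2]
  have hd : C ^ 2 / 4 ≤ (y - μ) ^ 2 := by
    have h1 : C / 2 ≤ |y - μ| := by
      have h0 : |μ| - |y| ≤ |μ - y| := abs_sub_abs_le_abs_sub μ y
      rw [abs_sub_comm] at h0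
      linarith
    have h2 : (C/2)^2 ≤ |y - μ|^2 := pow_le_pow_left₀ (by positivity) h1 2
    rw [sq_abs] at h2
    nlinarith
  set t : ℝ := C ^ 2 / (4 * σ2) with ht
  have htpos : 0 < t := by positivity
  have hlogt : Real.log t ≤ t := (Real.log_le_sub_one_of_pos htpos).trans (by linarith)
  have hsplit : Real.log (Real.pi * C ^ 2 / 2) = Real.log (2 * Real.pi * σ2) + Real.log t := by
    rw [← Real.log_mul (by positivity) (ne_of_gt htpos)]
    congr 1
    field_simp [ht]
    rw [ht]; field_simp; norm_num
  have hdd : C^2/4 / (2 * σ2) ≤ (y - μ)^2 / (2 * σ2) :=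
    div_le_div_of_nonneg_right hd (by positivity)
  have hteq : C^2/4 / (2 * σ2) = t / 2 := by rw [ht]; ring
  rw [hsplit]
  rw [hteq] at hdd
  linarith

theorem stmt_6 {Ω : Type*} [MeasurableSpace Ω]
    (P : Measure Ω) [IsProbabilityMeasure P]
    (Y : Ω → ℝ) (hY : Measurable Y)
    (σlb : ℝ) (hσlb : 0 < σlb) :
    (∀ C : ℝ, 0 < C →
      ∫ ω, (⨆ θ : {θ : ℝ × ℝ // σlb ≤ θ.2 ∧ C ≤ |θ.1|},
          Real.log (gaussDens θ.1.1 θ.1.2 (Y ω))) ∂P ≤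
        -(1 / 2) * Real.log (2 * Real.pi * σlb) * (P {ω | C / 2 ≤ |Y ω|}).toReal
          - (1 / 2) * Real.log (Real.pi * C ^ 2 / 2) * (P {ω | |Y ω| < C / 2}).toReal) ∧
      Tendsto (fun C : ℝ =>
          -(1 / 2) * Real.log (2 * Real.pi * σlb) * (P {ω | C / 2 ≤ |Y ω|}).toReal
            - (1 / 2) * Real.log (Real.pi * C ^ 2 / 2) * (P {ω | |Y ω| < C / 2}).toReal)
        atTop atBot := by
  constructor
  · intro C hC
    have hAmeas : MeasurableSet {ω | C / 2 ≤ |Y ω|} := measurableSet_le measurable_const hY.abs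
    have hBmeas : MeasurableSet {ω | |Y ω| < C / 2} := measurableSet_lt hY.abs measurable_const
    set c1 : ℝ := -(1/2) * Real.log (2 * Real.pi * σlb) with hc1
    set c2 : ℝ := -(1/2) * Real.log (Real.pi * C ^ 2 / 2) with hc2
    set lb : ℝ := -(1/2) * Real.log (2 * Real.pi * (σlb + 4 * C ^ 2)) - 1/2 with hlbdef
    haveI hne : Nonempty {θ : ℝ × ℝ // σlb ≤ θ.2 ∧ C ≤ |θ.1|} :=
      ⟨⟨(C, σlb), le_rfl, le_abs_self C⟩⟩
    set h : ℝ → ℝ := fun y =>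
      ⨆ θ : {θ : ℝ × ℝ // σlb ≤ θ.2 ∧ C ≤ |θ.1|}, Real.log (gaussDens θ.1.1 θ.1.2 y) with hh
    have hbdd : ∀ y : ℝ, BddAbove (Set.range fun θ : {θ : ℝ × ℝ // σlb ≤ θ.2 ∧ C ≤ |θ.1|} =>
        Real.log (gaussDens θ.1.1 θ.1.2 y)) := by
      intro y
      refine ⟨c1, ?_⟩
      rintro _ ⟨θ, rfl⟩
      exact logA hσlb θ.2.1 _ _
    have hub1 : ∀ y : ℝ, h y ≤ c1 := fun y => ciSup_le fun θ => logA hσlb θ.2.1 _ _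
    have hub2 : ∀ y : ℝ, |y| < C / 2 → h y ≤ c2 := fun y hy =>
      ciSup_le fun θ => logB hσlb θ.2.1 hC θ.2.2 hy
    have hlb : ∀ y : ℝ, lb ≤ h y := by
      intro y
      obtain ⟨μy, hμy, hdy⟩ : ∃ μy : ℝ, C ≤ |μy| ∧ (y - μy) ^ 2 ≤ 4 * C ^ 2 := by
        by_cases hcy : C ≤ |y|
        · exact ⟨y, hcy, by nlinarith⟩
        · refine ⟨C, le_abs_self C, ?_⟩
          have h0 := abs_lt.1 (not_le.1 hcy)
          nlinarith
      have hvpos : 0 < σlb + (y - μy) ^ 2 := by positivity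
      have hle : Real.log (gaussDens μy (σlb + (y - μy) ^ 2) y) ≤ h y :=
        le_ciSup (hbdd y) ⟨(μy, σlb + (y - μy) ^ 2), le_add_of_nonneg_right (by positivity), hμy⟩
      refine le_trans ?_ hle
      rw [log_gaussDens hvpos]
      have h1 : Real.log (2 * Real.pi * (σlb + (y - μy) ^ 2)) ≤
          Real.log (2 * Real.pi * (σlb + 4 * C ^ 2)) :=
        Real.log_le_log (by positivity) (by nlinarith [Real.pi_pos])
      have h2 : (y - μy) ^ 2 / (2 * (σlb + (y - μy) ^ 2)) ≤ 1 / 2 := by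
        rw [div_le_iff₀ (by positivity)]
        nlinarith
      rw [hlbdef]
      linarith
    have hcont : ∀ θ : {θ : ℝ × ℝ // σlb ≤ θ.2 ∧ C ≤ |θ.1|},
        Continuous fun y => Real.log (gaussDens θ.1.1 θ.1.2 y) := by
      intro θ
      have h2 : (0:ℝ) < θ.1.2 := hσlb.trans_le θ.2.1
      have heq : (fun y => Real.log (gaussDens θ.1.1 θ.1.2 y)) =
          fun y => -(1/2) * Real.log (2 * Real.pi * θ.1.2) - (y - θ.1.1) ^ 2 / (2 * θ.1.2) :=
        funext fun y => log_gaussDens h2 _ y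
      rw [heq]
      exact continuous_const.sub (((continuous_id.sub continuous_const).pow 2).div_const _)
    have hmeas : Measurable h :=
      (lowerSemicontinuous_ciSup hbdd fun θ => (hcont θ).lowerSemicontinuous).measurable
    set g : Ω → ℝ := fun ω => Set.indicator {ω | C / 2 ≤ |Y ω|} (fun _ => c1) ω
        + Set.indicator {ω | |Y ω| < C / 2} (fun _ => c2) ω with hg
    have hgs : ∀ ω, h (Y ω) ≤ g ω := by
      intro ω
      by_cases hy : C / 2 ≤ |Y ω|
      · have hgω : g ω = c1 := by
          simp [hg, Set.indicator_apply, hy, not_lt.2 hy]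
        rw [hgω]; exact hub1 _
      · have hgω : g ω = c2 := by
          simp [hg, Set.indicator_apply, hy, not_le.1 hy]
        rw [hgω]; exact hub2 _ (not_le.1 hy)
    have hgint : Integrable g P :=
      ((integrable_const c1).indicator hAmeas).add ((integrable_const c2).indicator hBmeas)
    have hsint : Integrable (fun ω => h (Y ω)) P := by
      refine (integrable_const (max |lb| |c1|)).mono'
        ((hmeas.comp hY).aestronglyMeasurable) (ae_of_all _ fun ω => ?_)
      rw [Real.norm_eq_abs]
      exact abs_le_max_abs_abs (hlb (Y ω)) (hub1 (Y ω))
    have hint : ∫ ω, h (Y ω) ∂P ≤ ∫ ω, g ω ∂P := integral_mono hsint hgint hgs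
    have hgval : ∫ ω, g ω ∂P = c1 * (P {ω | C / 2 ≤ |Y ω|}).toReal
        + c2 * (P {ω | |Y ω| < C / 2}).toReal := by
      rw [hg, integral_add ((integrable_const c1).indicator hAmeas)
        ((integrable_const c2).indicator hBmeas),
        integral_indicator_const _ hAmeas, integral_indicator_const _ hBmeas]
      simp [smul_eq_mul, mul_comm, Measure.real]
    calc ∫ ω, h (Y ω) ∂P ≤ ∫ ω, g ω ∂P := hint
      _ = c1 * (P {ω | C / 2 ≤ |Y ω|}).toReal + c2 * (P {ω | |Y ω| < C / 2}).toReal := hgval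
      _ = -(1 / 2) * Real.log (2 * Real.pi * σlb) * (P {ω | C / 2 ≤ |Y ω|}).toReal
          - (1 / 2) * Real.log (Real.pi * C ^ 2 / 2) * (P {ω | |Y ω| < C / 2}).toReal := by
        rw [hc1, hc2]; ring
  · have hq : Tendsto (fun C : ℝ => P {ω | |Y ω| < C / 2}) atTop (𝓝 1) := by
      have hmono : Monotone fun C : ℝ => {ω | |Y ω| < C / 2} := by
        intro a b hab ω hω
        simp only [Set.mem_setOf_eq] at hω ⊢
        linarith
      have hun : (⋃ C : ℝ, {ω | |Y ω| < C / 2}) = Set.univ := by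
        ext ω
        simp only [Set.mem_iUnion, Set.mem_univ, iff_true, Set.mem_setOf_eq]
        exact ⟨2 * |Y ω| + 2, by linarith [abs_nonneg (Y ω)]⟩
      have h0 := tendsto_measure_iUnion_atTop (μ := P) hmono
      rwa [hun, measure_univ] at h0
    have hqr : Tendsto (fun C : ℝ => (P {ω | |Y ω| < C / 2}).toReal) atTop (𝓝 1) := by
      have h0 := (ENNReal.tendsto_toReal (by norm_num : (1 : ENNReal) ≠ ⊤)).comp hq
      simpa [Function.comp_def] using h0
    have hL : Tendsto (fun C : ℝ => Real.log (Real.pi * C ^ 2 / 2)) atTop atTop := by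
      apply Real.tendsto_log_atTop.comp
      have h1 : Tendsto (fun C : ℝ => C ^ 2) atTop atTop := tendsto_pow_atTop (by norm_num)
      exact (h1.const_mul_atTop Real.pi_pos).atTop_div_const (by norm_num)
    set K : ℝ := |Real.log (2 * Real.pi * σlb)| with hK
    have hev : ∀ᶠ C in atTop,
        -(1 / 2) * Real.log (2 * Real.pi * σlb) * (P {ω | C / 2 ≤ |Y ω|}).toReal
          - (1 / 2) * Real.log (Real.pi * C ^ 2 / 2) * (P {ω | |Y ω| < C / 2}).toReal ≤
        K - (1/4) * Real.log (Real.pi * C ^ 2 / 2) := by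
      filter_upwards [hqr.eventually (eventually_gt_nhds (by norm_num : (1:ℝ)/2 < 1)),
        hL.eventually_ge_atTop 0] with C hqC hLC
      have hp0 : 0 ≤ (P {ω | C / 2 ≤ |Y ω|}).toReal := ENNReal.toReal_nonneg
      have hp1 : (P {ω | C / 2 ≤ |Y ω|}).toReal ≤ 1 := by
        calc (P {ω | C / 2 ≤ |Y ω|}).toReal ≤ (P Set.univ).toReal :=
              ENNReal.toReal_mono (measure_ne_top P _) (measure_mono (Set.subset_univ _))
          _ = 1 := by simp
      have hK1 : -K ≤ Real.log (2 * Real.pi * σlb) := neg_abs_le _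
      have hK0 : 0 ≤ K := abs_nonneg _
      nlinarith [mul_nonneg hLC (le_of_lt (show (0:ℝ) < (P {ω | |Y ω| < C / 2}).toReal - 1/2 + 1/2 by linarith))]
    refine tendsto_atBot_mono' atTop hev ?_
    have h1 : Tendsto (fun C : ℝ => (1/4) * Real.log (Real.pi * C ^ 2 / 2)) atTop atTop :=
      hL.const_mul_atTop (by norm_num)
    have h2 : Tendsto (fun C : ℝ => -((1/4) * Real.log (Real.pi * C ^ 2 / 2))) atTop atBot :=
      tendsto_neg_atTop_atBot.comp h1
    have h3 := tendsto_atBot_add_const_left atTop K h2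
    simpa [sub_eq_add_neg] using h3
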